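/- Let r, μ ∈ ℤ⁺ and λ, σ be such that σ^{−1} ∈ ℤ⁺, λ is a positive integer multiple of 5, λσ is a positive integer multiple of 5, and 40σr ≤ 1. Then for every t and all k, k' ∈ Λ: (i) P_{[λ/2, 2λ]} w_{k,λ,σ,r,μ}(t,·) = w_{k,λ,σ,r,μ}(t,·); (ii) if k + k' ≠ 0 then P_{[λ/5, 4λ]}( w_{k,λ,σ,r,μ}(t,·) ⊘ w_{k',λ,σ,r,μ}(t,·) ) = w_{k,λ,σ,r,μ}(t,·) ⊘ w_{k',λ,σ,r,μ}(t,·); (iii) P_{≥ λσ/2}( w_{k,λ,σ,r,μ}(t,·) ⊘ w_{k',λ,σ,r,μ}(t,·) ) = P_{≠0}( w_{k,λ,σ,r,μ}(t,·) ⊘ w_{k',λ,σ,r,μ}(t,·) ); and (iv) P_{≠0} η_{k,λ,σ,r,μ}(t,·) = P_{≥ λσ/2} η_{k,λ,σ,r,μ}(t,·). Here the projectors act on each matrix or vector entry in the spatial variable. -/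

import Mathlib

open MeasureTheory Real Filter Matrix
open scoped ENNReal NNReal

noncomputable section

/-- Points of the torus `𝕋² = ℝ²/(2πℤ)²` are represented by points of `ℝ²`;
functions on `𝕋²` are `2π`-periodic functions on `ℝ²`. -/
abbrev Vec2 := Fin 2 → ℝ

/-- The `j`-th standard basis vector of `ℝ²`. -/
def e2 (j : Fin 2) : Vec2 := Pi.single j 1

/-- A fundamental domain for `𝕋²`. -/
def Q2 : Set Vec2 := Set.univ.pi fun _ => Set.Ioc (0:ℝ) (2*π)

/-- Lebesgue measure on `𝕋²`, realized on the fundamental domain. -/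
def μT : Measure Vec2 := volume.restrict Q2

/-- `2π`-periodicity in each coordinate: a function on `𝕋²`. -/
def Per {α : Type*} (f : Vec2 → α) : Prop :=
  ∀ (x : Vec2) (j : Fin 2), f (x + (2*π) • e2 j) = f x

/-- Divergence of a vector field. -/
def divg (f : Vec2 → Vec2) (x : Vec2) : ℝ := ∑ j, fderiv ℝ (fun y => f y j) x (e2 j)

/-- `e^{iξ·x}` for a frequency `ξ ∈ ℤ²`. -/
def eFreq (ξ : ℤ × ℤ) (x : Vec2) : ℂ :=
  Complex.exp (Complex.I * ((ξ.1 * x 0 + ξ.2 * x 1 : ℝ) : ℂ))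

/-- Fourier coefficient of a (periodic) function on `𝕋²`. -/
def fCoeff (f : Vec2 → ℂ) (ξ : ℤ × ℤ) : ℂ :=
  (4*π^2 : ℝ)⁻¹ * ∫ x in Q2, f x * eFreq (-ξ) x

/-- Euclidean norm of a frequency `ξ ∈ ℤ²`. -/
def freqNorm (ξ : ℤ × ℤ) : ℝ := Real.sqrt ((ξ.1:ℝ)^2 + (ξ.2:ℝ)^2)

/-- The fractional Laplacian `(−Δ)^θ`, defined via Fourier series:
`((−Δ)^θ f)^(ξ) = |ξ|^{2θ} f̂(ξ)`. -/
def fracLap (θ : ℝ) (f : Vec2 → ℂ) (x : Vec2) : ℂ :=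
  ∑' ξ : ℤ × ℤ, ((freqNorm ξ ^ (2*θ) : ℝ) : ℂ) * fCoeff f ξ * eFreq ξ x

/-- The fractional Laplacian of a real-valued function. -/
def fracLapR (θ : ℝ) (f : Vec2 → ℝ) (x : Vec2) : ℝ :=
  (fracLap θ (fun y => (f y : ℂ)) x).re

/-- The set `Λ⁺` of direction vectors. -/
def Λp : Finset Vec2 :=
  { ![3/5, 4/5], ![3/5, -4/5], ![4/5, 3/5], ![4/5, -3/5] }

/-- The set `Λ⁻ = −Λ⁺`. -/
def Λm : Finset Vec2 := Λp.image (fun k => -k)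

/-- The set of directions `Λ = Λ⁺ ∪ Λ⁻`. -/
def Λdir : Finset Vec2 := Λp ∪ Λm

/-- `k⊥ = (−k₂, k₁)`. -/
def perp (k : Vec2) : Vec2 := ![-(k 1), k 0]

/-- Trace-free part of the tensor product of two real vectors:
`f ⊘ g = f ⊗ g − ½(f·g) I₂`. -/
def ot (f g : Vec2) : Fin 2 → Fin 2 → ℝ :=
  fun i j => f i * g j - (if i = j then (f ⬝ᵥ g) / 2 else 0)

/-- Trace-free part of the tensor product of two complex vectors. -/
def otC (f g : Fin 2 → ℂ) : Fin 2 → Fin 2 → ℂ :=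
  fun i j => f i * g j - (if i = j then (f ⬝ᵥ g) / 2 else 0)

/-- The 2D stationary flow `b_{k,λ}(x) = i k⊥ e^{iλ k·x}`. -/
def bflow (k : Vec2) (l : ℝ) (x : Vec2) : Fin 2 → ℂ :=
  fun i => Complex.I * ((perp k i : ℝ) : ℂ) * Complex.exp (Complex.I * ((l * (k ⬝ᵥ x) : ℝ) : ℂ))

/-- Its potential `ψ_{k,λ}(x) = λ⁻¹ e^{iλ k·x}`. -/
def ψflow (k : Vec2) (l : ℝ) (x : Vec2) : ℂ :=
  ((l : ℂ))⁻¹ * Complex.exp (Complex.I * ((l * (k ⬝ᵥ x) : ℝ) : ℂ))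

/-- Partial derivative `∂_j` of a complex-valued function on `ℝ²`. -/
def pdC (j : Fin 2) (f : Vec2 → ℂ) : Vec2 → ℂ := fun x => fderiv ℝ f x (e2 j)

/-- The index set `Ω_r = {k ∈ ℤ² : |k₁| ≤ r, |k₂| ≤ r}`. -/
def Ωr (r : ℕ) : Finset (ℤ × ℤ) := Finset.Icc (-(r:ℤ)) r ×ˢ Finset.Icc (-(r:ℤ)) r

/-- The 2D Dirichlet kernel `D_r(x) = (2r+1)⁻¹ Σ_{k∈Ω_r} e^{ik·x}` on `𝕋²`. -/
def Dker (r : ℕ) (x : Vec2) : ℂ :=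
  (((2*(r:ℝ)+1) : ℝ) : ℂ)⁻¹ *
    ∑ k ∈ Ωr r, Complex.exp (Complex.I * (((k.1 : ℝ) * x 0 + (k.2 : ℝ) * x 1 : ℝ) : ℂ))

/-- The 2D Dirichlet kernel as a real-valued function of two real arguments. -/
def DkerR (r : ℕ) (a b : ℝ) : ℝ :=
  ((((2*(r:ℝ)+1) : ℝ) : ℂ)⁻¹ *
    ∑ k ∈ Ωr r, Complex.exp (Complex.I * (((k.1 : ℝ) * a + (k.2 : ℝ) * b : ℝ) : ℂ))).re

/-- The directed–rescaled Dirichlet kernel with temporal shift: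
`η_{k,λ,σ,r,μ}(t,x) = D_r(λσ(k·x + μt), λσ k⊥·x)` for `k ∈ Λ⁺`, and
`η_{k,λ,σ,r,μ} = η_{−k,λ,σ,r,μ}` for `k ∈ Λ⁻`. -/
def ηfun (k : Vec2) (l σ : ℝ) (r : ℕ) (μ : ℝ) (t : ℝ) (x : Vec2) : ℝ :=
  if k ∈ Λp then
    DkerR r (l * σ * (k ⬝ᵥ x + μ * t)) (l * σ * (perp k ⬝ᵥ x))
  else
    DkerR r (l * σ * ((-k) ⬝ᵥ x + μ * t)) (l * σ * (perp (-k) ⬝ᵥ x))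

/-- The intermittent 2D stationary flow `w_{k,λ,σ,r,μ}(t,x) = η_{k,λ,σ,r,μ}(t,x) b_{k,λ}(x)`. -/
def wflow (k : Vec2) (l σ : ℝ) (r : ℕ) (μ : ℝ) (t : ℝ) (x : Vec2) : Fin 2 → ℂ :=
  fun i => ((ηfun k l σ r μ t x : ℝ) : ℂ) * bflow k l x i

/-- The Fourier projector `P_{[λ₁,λ₂]}` onto frequencies `λ₁ ≤ |ξ| ≤ λ₂`. -/
def Pband (l1 l2 : ℝ) (f : Vec2 → ℂ) (x : Vec2) : ℂ :=
  ∑' ξ : ℤ × ℤ, if l1 ≤ freqNorm ξ ∧ freqNorm ξ ≤ l2 then fCoeff f ξ * eFreq ξ x else 0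

/-- The Fourier projector `P_{≥λ}` onto frequencies `|ξ| ≥ λ`. -/
def Pge (l : ℝ) (f : Vec2 → ℂ) (x : Vec2) : ℂ :=
  ∑' ξ : ℤ × ℤ, if l ≤ freqNorm ξ then fCoeff f ξ * eFreq ξ x else 0

/-- The projector `P_{≠0} f = f − ⨍ f` removing the mean. -/
def Pne0 (f : Vec2 → ℂ) (x : Vec2) : ℂ :=
  f x - (4*π^2 : ℝ)⁻¹ * ∫ y in Q2, f y


/-! ### Auxiliary lemmas -/

section Aux

lemma int1d (n : ℤ) : ∫ x in Set.Ioc (0:ℝ) (2*π), Complex.exp (Complex.I * n * x)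
    = if n = 0 then ((2*π : ℝ) : ℂ) else 0 := by
  rcases eq_or_ne n 0 with h | h
  · simp only [h, Int.cast_zero, mul_zero, zero_mul, Complex.exp_zero, if_pos rfl]
    rw [setIntegral_const]
    rw [measureReal_def, Real.volume_Ioc]
    rw [ENNReal.toReal_ofReal (by linarith [Real.pi_pos])]
    simp
  · rw [if_neg h, ← intervalIntegral.integral_of_le (by linarith [Real.pi_pos] : (0:ℝ) ≤ 2*π)]
    rw [integral_exp_mul_complex (by simp [Complex.ext_iff, h] : Complex.I * n ≠ 0)]
    have : Complex.I * n * ((2*π : ℝ) : ℂ) = n * (2 * π * Complex.I) := by push_cast; ring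
    rw [this, Complex.exp_int_mul_two_pi_mul_I]
    simp

lemma integral_eFreq (ξ : ℤ × ℤ) :
    ∫ x in Q2, eFreq ξ x = if ξ = 0 then ((4*π^2 : ℝ) : ℂ) else 0 := by
  have hemb := (MeasurableEquiv.finTwoArrow (α := ℝ)).measurableEmbedding
  have hmp := volume_preserving_finTwoArrow ℝ
  have hQ : Q2 = MeasurableEquiv.finTwoArrow ⁻¹' (Set.Ioc (0:ℝ) (2*π) ×ˢ Set.Ioc (0:ℝ) (2*π)) := by
    ext x
    simp [Q2, Set.mem_pi, MeasurableEquiv.finTwoArrow, Fin.forall_fin_two]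
  have key : ∫ x in Q2, eFreq ξ x
      = ∫ p in (Set.Ioc (0:ℝ) (2*π) ×ˢ Set.Ioc (0:ℝ) (2*π)),
          (Complex.exp (Complex.I * ξ.1 * p.1) * Complex.exp (Complex.I * ξ.2 * p.2)) := by
    rw [hQ]
    rw [← hmp.setIntegral_preimage_emb hemb]
    congr 1
    ext x
    rw [← Complex.exp_add]
    simp [eFreq, MeasurableEquiv.finTwoArrow]
    ring_nf
  rw [key, Measure.volume_eq_prod,
    setIntegral_prod_mul (fun a : ℝ => Complex.exp (Complex.I * (ξ.1:ℂ) * (a:ℂ)))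
      (fun b : ℝ => Complex.exp (Complex.I * (ξ.2:ℂ) * (b:ℂ))), int1d, int1d]
  rcases eq_or_ne ξ 0 with h | h
  · have h1 : ξ.1 = 0 := by rw [h]; rfl
    have h2 : ξ.2 = 0 := by rw [h]; rfl
    rw [if_pos h, if_pos h1, if_pos h2]
    push_cast
    ring
  · rw [if_neg h]
    by_cases h1 : ξ.1 = 0
    · have h2 : ξ.2 ≠ 0 := fun h2 => h (Prod.ext h1 h2)
      rw [if_neg h2]; ring
    · rw [if_neg h1]; ring

lemma eFreq_mul (ξ ζ : ℤ × ℤ) (x : Vec2) : eFreq ξ x * eFreq ζ x = eFreq (ξ + ζ) x := by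
  unfold eFreq
  rw [← Complex.exp_add]
  congr 1
  have : ((ξ+ζ).1 : ℝ) = ξ.1 + ζ.1 := by push_cast [Prod.fst_add]; ring
  have h2 : ((ξ+ζ).2 : ℝ) = ξ.2 + ζ.2 := by push_cast [Prod.snd_add]; ring
  rw [← mul_add]
  congr 1
  push_cast [this, h2]
  ring

lemma eFreq_zero_freq (x : Vec2) : eFreq 0 x = 1 := by
  simp [eFreq]

lemma eFreq_continuous (ξ : ℤ × ℤ) : Continuous (eFreq ξ) := by
  unfold eFreq
  fun_prop

lemma integrableOn_eFreq (ξ : ℤ × ℤ) : IntegrableOn (eFreq ξ) Q2 := by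
  have hK : IsCompact (Set.univ.pi fun _ : Fin 2 => Set.Icc (0:ℝ) (2*π)) :=
    isCompact_univ_pi fun _ => isCompact_Icc
  have hsub : Q2 ⊆ Set.univ.pi fun _ : Fin 2 => Set.Icc (0:ℝ) (2*π) := by
    intro x hx j hj
    exact Set.Ioc_subset_Icc_self (hx j hj)
  exact (((eFreq_continuous ξ).continuousOn).integrableOn_compact hK).mono_set hsub

lemma fCoeff_sum {ι : Type*} (T : Finset ι) (φ : ι → ℤ × ℤ) (c : ι → ℂ) (ξ0 : ℤ × ℤ) :
    fCoeff (fun x => ∑ m ∈ T, c m * eFreq (φ m) x) ξ0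
      = ∑ m ∈ T, if φ m = ξ0 then c m else 0 := by
  unfold fCoeff
  have h1 : ∀ x : Vec2, (∑ m ∈ T, c m * eFreq (φ m) x) * eFreq (-ξ0) x
      = ∑ m ∈ T, c m * eFreq (φ m + -ξ0) x := by
    intro x
    rw [Finset.sum_mul]
    exact Finset.sum_congr rfl fun m _ => by rw [mul_assoc, eFreq_mul]
  rw [integral_congr_ae (Eventually.of_forall h1)]
  rw [integral_finset_sum _ (fun m _ => (integrableOn_eFreq (φ m + -ξ0)).const_mul (c m))]
  rw [Finset.mul_sum]
  refine Finset.sum_congr rfl fun m _ => ?_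
  rw [MeasureTheory.integral_const_mul, integral_eFreq]
  have hpi : (4*π^2 : ℝ) ≠ 0 := by positivity
  rcases eq_or_ne (φ m) ξ0 with h | h
  · rw [if_pos (by simp [h]), if_pos h]
    rw [mul_comm (c m), ← mul_assoc, ← Complex.ofReal_mul, inv_mul_cancel₀ hpi]
    simp
  · rw [if_neg (by simpa [add_neg_eq_zero] using h), if_neg h]
    simp

lemma sum_fiber {ι : Type*} (T : Finset ι) (φ : ι → ℤ × ℤ) (g : ι → ℂ) (A : ℤ × ℤ → ℂ) :
    ∑ ξ ∈ T.image φ, (∑ m ∈ T, if φ m = ξ then g m else 0) * A ξ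
      = ∑ m ∈ T, g m * A (φ m) := by
  have h1 : ∀ ξ ∈ T.image φ, (∑ m ∈ T, if φ m = ξ then g m else 0) * A ξ
      = ∑ m ∈ T, if φ m = ξ then g m * A ξ else 0 := by
    intro ξ _
    rw [Finset.sum_mul]
    exact Finset.sum_congr rfl fun m _ => by rw [ite_mul, zero_mul]
  rw [Finset.sum_congr rfl h1, Finset.sum_comm]
  refine Finset.sum_congr rfl fun m hm => ?_
  have : ∀ ξ ∈ T.image φ, (if φ m = ξ then g m * A ξ else 0)
      = if φ m = ξ then g m * A (φ m) else 0 := by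
    intro ξ _
    rcases eq_or_ne (φ m) ξ with h | h
    · rw [if_pos h, if_pos h, h]
    · rw [if_neg h, if_neg h]
  rw [Finset.sum_congr rfl this, Finset.sum_ite_eq, if_pos (Finset.mem_image_of_mem φ hm)]

lemma fCoeff_of_rep {ι : Type*} {T : Finset ι} {φ : ι → ℤ × ℤ} {c : ι → ℂ} {f : Vec2 → ℂ}
    (hf : ∀ x, f x = ∑ m ∈ T, c m * eFreq (φ m) x) (ξ0 : ℤ × ℤ) :
    fCoeff f ξ0 = ∑ m ∈ T, if φ m = ξ0 then c m else 0 := by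
  have : f = fun x => ∑ m ∈ T, c m * eFreq (φ m) x := funext hf
  rw [this, fCoeff_sum]

lemma fCoeff_zero_of_notin {ι : Type*} {T : Finset ι} {φ : ι → ℤ × ℤ} {c : ι → ℂ} {f : Vec2 → ℂ}
    (hf : ∀ x, f x = ∑ m ∈ T, c m * eFreq (φ m) x) {ξ0 : ℤ × ℤ} (h : ξ0 ∉ T.image φ) :
    fCoeff f ξ0 = 0 := by
  rw [fCoeff_of_rep hf]
  refine Finset.sum_eq_zero fun m hm => ?_
  refine if_neg fun he => h ?_
  rw [← he]
  exact Finset.mem_image_of_mem φ hm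

lemma f_eq_sum_image {ι : Type*} {T : Finset ι} {φ : ι → ℤ × ℤ} {c : ι → ℂ} {f : Vec2 → ℂ}
    (hf : ∀ x, f x = ∑ m ∈ T, c m * eFreq (φ m) x) (x : Vec2) :
    f x = ∑ ξ ∈ T.image φ, fCoeff f ξ * eFreq ξ x := by
  rw [hf x, ← sum_fiber T φ c (fun ξ => eFreq ξ x)]
  exact Finset.sum_congr rfl fun ξ _ => by rw [fCoeff_of_rep hf]

lemma Pband_of_rep {ι : Type*} {T : Finset ι} {φ : ι → ℤ × ℤ} {c : ι → ℂ} {f : Vec2 → ℂ}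
    (hf : ∀ x, f x = ∑ m ∈ T, c m * eFreq (φ m) x) {l1 l2 : ℝ}
    (hfr : ∀ m ∈ T, l1 ≤ freqNorm (φ m) ∧ freqNorm (φ m) ≤ l2) (x : Vec2) :
    Pband l1 l2 f x = f x := by
  unfold Pband
  rw [tsum_eq_sum (s := T.image φ) (fun ξ0 h => by
    rw [fCoeff_zero_of_notin hf h, zero_mul, ite_self])]
  rw [f_eq_sum_image hf x]
  refine Finset.sum_congr rfl fun ξ hξ => ?_
  obtain ⟨m, hm, rfl⟩ := Finset.mem_image.1 hξ
  rw [if_pos (hfr m hm)]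

lemma Pge_eq_Pne0_of_rep {ι : Type*} {T : Finset ι} {φ : ι → ℤ × ℤ} {c : ι → ℂ} {f : Vec2 → ℂ}
    (hf : ∀ x, f x = ∑ m ∈ T, c m * eFreq (φ m) x) {L : ℝ} (hL : 0 < L)
    (hfr : ∀ m ∈ T, φ m ≠ 0 → L ≤ freqNorm (φ m)) (x : Vec2) :
    Pge L f x = Pne0 f x := by
  have hmean : Pne0 f x = f x - fCoeff f 0 := by
    unfold Pne0 fCoeff
    congr 2
    rw [neg_zero]
    exact (integral_congr_ae (Eventually.of_forall fun y => by
      simp only [eFreq_zero_freq, mul_one])).symm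
  unfold Pge
  rw [tsum_eq_sum (s := T.image φ) (fun ξ0 h => by
    rw [fCoeff_zero_of_notin hf h, zero_mul, ite_self])]
  rw [hmean, f_eq_sum_image hf x]
  have key : ∀ ξ ∈ T.image φ, (if L ≤ freqNorm ξ then fCoeff f ξ * eFreq ξ x else 0)
      = fCoeff f ξ * eFreq ξ x - (if ξ = 0 then fCoeff f ξ * eFreq ξ x else 0) := by
    intro ξ hξ
    obtain ⟨m, hm, rfl⟩ := Finset.mem_image.1 hξ
    rcases eq_or_ne (φ m) 0 with h0 | h0
    · rw [if_pos h0, if_neg (by rw [h0]; simpa [freqNorm] using hL.not_ge), sub_self]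
    · rw [if_pos (hfr m hm h0), if_neg h0, sub_zero]
  rw [Finset.sum_congr rfl key, Finset.sum_sub_distrib, Finset.sum_ite_eq']
  by_cases h0 : (0 : ℤ × ℤ) ∈ T.image φ
  · rw [if_pos h0, eFreq_zero_freq, mul_one]
  · rw [if_neg h0, fCoeff_zero_of_notin hf h0, sub_zero]

/-! ### Norm estimates on frequencies -/

def toE (ξ : ℤ × ℤ) : EuclideanSpace ℝ (Fin 2) := WithLp.toLp 2 ![(ξ.1 : ℝ), (ξ.2 : ℝ)]

lemma freqNorm_eq_norm (ξ : ℤ × ℤ) : freqNorm ξ = ‖toE ξ‖ := by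
  rw [EuclideanSpace.norm_eq]
  simp [freqNorm, toE, Fin.sum_univ_two, sq_abs]

lemma toE_add (ξ ζ : ℤ × ℤ) : toE (ξ + ζ) = toE ξ + toE ζ := by
  ext i
  fin_cases i <;> simp [toE, Prod.fst_add, Prod.snd_add]

lemma freqNorm_nonneg (ξ : ℤ × ℤ) : 0 ≤ freqNorm ξ := Real.sqrt_nonneg _

lemma freqNorm_add_le (ξ ζ : ℤ × ℤ) : freqNorm (ξ + ζ) ≤ freqNorm ξ + freqNorm ζ := by
  rw [freqNorm_eq_norm, freqNorm_eq_norm, freqNorm_eq_norm, toE_add]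
  exact norm_add_le _ _

lemma freqNorm_add_ge (ξ ζ : ℤ × ℤ) : freqNorm ξ - freqNorm ζ ≤ freqNorm (ξ + ζ) := by
  have := freqNorm_add_le (ξ + ζ) (-ζ)
  have hne : freqNorm (-ζ) = freqNorm ζ := by simp [freqNorm]
  rw [add_neg_cancel_right, hne] at this
  linarith

/-- The frequency map `m ↦ n (m₁ (a,b) + m₂ (a,b)^⊥)` written in coordinates. -/
def φf (n a b : ℤ) (m : ℤ × ℤ) : ℤ × ℤ := (n*(m.1*a - m.2*b), n*(m.1*b + m.2*a))

lemma freqNorm_φf {n a b : ℤ} (hn : 0 ≤ n) (m : ℤ × ℤ) :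
    freqNorm (φf n a b m) = n * Real.sqrt ((a:ℝ)^2 + (b:ℝ)^2) * freqNorm m := by
  unfold freqNorm φf
  have h1 : ((n*(m.1*a - m.2*b) : ℤ) : ℝ)^2 + ((n*(m.1*b + m.2*a) : ℤ) : ℝ)^2
      = (n:ℝ)^2 * (((a:ℝ)^2 + (b:ℝ)^2) * (((m.1:ℝ))^2 + ((m.2:ℝ))^2)) := by
    push_cast; ring
  rw [h1, Real.sqrt_mul (by positivity), Real.sqrt_mul (by positivity),
    Real.sqrt_sq (by exact_mod_cast hn)]
  ring

lemma freqNorm_pair (n A B : ℤ) (hn : 0 ≤ n) :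
    freqNorm (n*A, n*B) = (n:ℝ) * Real.sqrt ((A:ℝ)^2 + (B:ℝ)^2) := by
  unfold freqNorm
  have h1 : ((n*A:ℤ):ℝ)^2 + ((n*B:ℤ):ℝ)^2 = (n:ℝ)^2 * ((A:ℝ)^2+(B:ℝ)^2) := by
    push_cast; ring
  rw [h1, Real.sqrt_mul (by positivity), Real.sqrt_sq (by exact_mod_cast hn)]

lemma freqNorm_ge_one {m : ℤ × ℤ} (hm : m ≠ 0) : 1 ≤ freqNorm m := by
  have hnn : 0 ≤ m.1^2 + m.2^2 := by positivity
  have hne : m.1^2 + m.2^2 ≠ 0 := by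
    intro hs
    have h1 : m.1^2 = 0 := le_antisymm (by nlinarith [sq_nonneg m.2]) (by positivity)
    have h2 : m.2^2 = 0 := le_antisymm (by nlinarith [sq_nonneg m.1]) (by positivity)
    exact hm (Prod.ext (pow_eq_zero_iff two_ne_zero |>.1 h1) (pow_eq_zero_iff two_ne_zero |>.1 h2))
  have h : (1:ℤ) ≤ m.1^2 + m.2^2 := by omega
  calc (1:ℝ) = Real.sqrt 1 := (Real.sqrt_one).symm
  _ ≤ _ := Real.sqrt_le_sqrt (by exact_mod_cast h)

lemma freqNorm_le_sqrt2 {r : ℕ} {m : ℤ × ℤ} (h1 : |m.1| ≤ (r:ℤ)) (h2 : |m.2| ≤ (r:ℤ)) :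
    freqNorm m ≤ Real.sqrt 2 * r := by
  have k1 : (m.1:ℝ)^2 ≤ (r:ℝ)^2 := by
    have := abs_le.1 h1
    have l1 : -(r:ℝ) ≤ (m.1:ℝ) := by exact_mod_cast this.1
    have l2 : (m.1:ℝ) ≤ (r:ℝ) := by exact_mod_cast this.2
    nlinarith
  have k2 : (m.2:ℝ)^2 ≤ (r:ℝ)^2 := by
    have := abs_le.1 h2
    have l1 : -(r:ℝ) ≤ (m.2:ℝ) := by exact_mod_cast this.1
    have l2 : (m.2:ℝ) ≤ (r:ℝ) := by exact_mod_cast this.2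
    nlinarith
  calc freqNorm m ≤ Real.sqrt (2 * (r:ℝ)^2) := Real.sqrt_le_sqrt (by linarith)
  _ = Real.sqrt 2 * r := by
      rw [Real.sqrt_mul (by norm_num), Real.sqrt_sq (by positivity)]

lemma S_ge_two {a b a' b' : ℤ} (h : Odd (a+b)) (h' : Odd (a'+b'))
    (hne : ¬(a + a' = 0 ∧ b + b' = 0)) : 2 ≤ (a+a')^2 + (b+b')^2 := by
  obtain ⟨c, hc⟩ : Even ((a+a') + (b+b')) := by
    have he : (a+a') + (b+b') = (a+b) + (a'+b') := by ring
    rw [he]; exact h.add_odd h'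
  have h2 : (a+a')^2 + (b+b')^2 = 2*(2*c^2 - (a+a')*(b+b')) := by
    linear_combination (a+a'+b+b'+2*c)*hc
  have hpos : 0 < (a+a')^2 + (b+b')^2 := by
    rcases (not_and_or.1 hne) with h | h
    · have : 0 < (a+a')^2 := by positivity
      nlinarith [sq_nonneg (b+b')]
    · have : 0 < (b+b')^2 := by positivity
      nlinarith [sq_nonneg (a+a')]
  have hD : 0 < 2*c^2 - (a+a')*(b+b') := by linarith
  have hD1 : (1:ℤ) ≤ 2*c^2 - (a+a')*(b+b') := hD
  linarith

/-! ### Expansion of the flows in Fourier modes -/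

lemma mem_Ωr {r : ℕ} {m : ℤ × ℤ} :
    m ∈ Ωr r ↔ (-(r:ℤ) ≤ m.1 ∧ m.1 ≤ r) ∧ (-(r:ℤ) ≤ m.2 ∧ m.2 ≤ r) := by
  simp [Ωr, Finset.mem_product, Finset.mem_Icc]

lemma sum_Ωr_neg {M : Type*} [AddCommMonoid M] (r : ℕ) (f : ℤ × ℤ → M) :
    ∑ m ∈ Ωr r, f (-m) = ∑ m ∈ Ωr r, f m := by
  refine Finset.sum_equiv (Equiv.neg (ℤ × ℤ)) (fun m => ?_) (fun m _ => rfl)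
  simp only [mem_Ωr, Equiv.neg_apply, Prod.fst_neg, Prod.snd_neg]
  omega

lemma DkerR_complex (r : ℕ) (a b : ℝ) :
    ((DkerR r a b : ℝ) : ℂ) = (((2*(r:ℝ)+1) : ℝ) : ℂ)⁻¹ *
      ∑ m ∈ Ωr r, Complex.exp (Complex.I * (((m.1 : ℝ) * a + (m.2 : ℝ) * b : ℝ) : ℂ)) := by
  set z := (((2*(r:ℝ)+1) : ℝ) : ℂ)⁻¹ *
      ∑ m ∈ Ωr r, Complex.exp (Complex.I * (((m.1 : ℝ) * a + (m.2 : ℝ) * b : ℝ) : ℂ)) with hz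
  have hconj : (starRingEnd ℂ) z = z := by
    rw [hz, _root_.map_mul, map_inv₀, Complex.conj_ofReal, map_sum]
    congr 1
    have hterm : ∀ m ∈ Ωr r,
        (starRingEnd ℂ) (Complex.exp (Complex.I * (((m.1 : ℝ) * a + (m.2 : ℝ) * b : ℝ) : ℂ)))
        = Complex.exp (Complex.I * ((((-m).1 : ℝ) * a + ((-m).2 : ℝ) * b : ℝ) : ℂ)) := by
      intro m _
      rw [← Complex.exp_conj]
      congr 1
      rw [_root_.map_mul, Complex.conj_I, Complex.conj_ofReal]
      push_cast [Prod.fst_neg, Prod.snd_neg]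
      ring
    rw [Finset.sum_congr rfl hterm]
    exact sum_Ωr_neg r fun m => Complex.exp (Complex.I * (((m.1 : ℝ) * a + (m.2 : ℝ) * b : ℝ) : ℂ))
  rw [DkerR, ← Complex.conj_eq_iff_re.1 hconj, hz]

lemma eta_expand (l σ : ℝ) (nσ : ℤ) (hnσ : l * σ = 5 * nσ) (r : ℕ) (μ t : ℝ)
    (k : Vec2) (a b : ℤ) (hk0 : k 0 = (a:ℝ)/5) (hk1 : k 1 = (b:ℝ)/5) :
    ∃ c : ℤ × ℤ → ℂ, ∀ x, ((ηfun k l σ r μ t x : ℝ) : ℂ)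
      = ∑ m ∈ Ωr r, c m * eFreq (φf nσ a b m) x := by
  have hdot : ∀ (u v : ℝ) (w : Vec2), (w 0 = u) → (w 1 = v) → ∀ x : Vec2,
      w ⬝ᵥ x = u * x 0 + v * x 1 := by
    intro u v w h0 h1 x
    simp [dotProduct, Fin.sum_univ_two, h0, h1]
  by_cases hp : k ∈ Λp
  · refine ⟨fun m => (((2*(r:ℝ)+1) : ℝ) : ℂ)⁻¹ *
      Complex.exp (Complex.I * (((m.1 : ℝ) * (l*σ*(μ*t)) : ℝ) : ℂ)), fun x => ?_⟩
    rw [ηfun, if_pos hp, DkerR_complex, Finset.mul_sum]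
    refine Finset.sum_congr rfl fun m _ => ?_
    beta_reduce
    conv_rhs => rw [eFreq, mul_assoc, ← Complex.exp_add, ← mul_add, ← Complex.ofReal_add]
    congr 3
    rw [Complex.ofReal_inj]
    rw [hdot ((a:ℝ)/5) ((b:ℝ)/5) k hk0 hk1 x,
        hdot (-((b:ℝ)/5)) ((a:ℝ)/5) (perp k) (by simp [perp, hk1]) (by simp [perp, hk0]) x]
    unfold φf
    push_cast
    linear_combination ((m.1:ℝ)*((a:ℝ)*x 0+(b:ℝ)*x 1) + (m.2:ℝ)*(-(b:ℝ)*x 0+(a:ℝ)*x 1))/5 * hnσ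
  · refine ⟨fun m => (((2*(r:ℝ)+1) : ℝ) : ℂ)⁻¹ *
      Complex.exp (Complex.I * ((-(m.1 : ℝ) * (l*σ*(μ*t)) : ℝ) : ℂ)), fun x => ?_⟩
    rw [ηfun, if_neg hp, DkerR_complex, ← sum_Ωr_neg r
      (fun m => ((((2*(r:ℝ)+1) : ℝ) : ℂ)⁻¹ *
        Complex.exp (Complex.I * ((-(m.1 : ℝ) * (l*σ*(μ*t)) : ℝ) : ℂ))) * eFreq (φf nσ a b m) x),
      Finset.mul_sum]
    refine Finset.sum_congr rfl fun m _ => ?_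
    beta_reduce
    conv_rhs => rw [eFreq, mul_assoc, ← Complex.exp_add, ← mul_add, ← Complex.ofReal_add]
    congr 3
    rw [Complex.ofReal_inj]
    rw [hdot (-((a:ℝ)/5)) (-((b:ℝ)/5)) (-k) (by simp [hk0]) (by simp [hk1]) x,
        hdot ((b:ℝ)/5) (-((a:ℝ)/5)) (perp (-k)) (by simp [perp, hk1]) (by simp [perp, hk0]) x]
    unfold φf
    push_cast [Prod.fst_neg, Prod.snd_neg]
    linear_combination ((-(m.1:ℝ))*((a:ℝ)*x 0+(b:ℝ)*x 1) + (-(m.2:ℝ))*(-(b:ℝ)*x 0+(a:ℝ)*x 1))/5 * hnσ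

lemma w_expand (l σ : ℝ) (nσ nl : ℤ) (hnσ : l * σ = 5 * nσ) (hnl : l = 5 * nl)
    (r : ℕ) (μ t : ℝ) (k : Vec2) (a b : ℤ) (hk0 : k 0 = (a:ℝ)/5) (hk1 : k 1 = (b:ℝ)/5)
    (i : Fin 2) :
    ∃ c : ℤ × ℤ → ℂ, ∀ x, wflow k l σ r μ t x i
      = ∑ m ∈ Ωr r, c m * eFreq (φf nσ a b m + (nl*a, nl*b)) x := by
  obtain ⟨c, hc⟩ := eta_expand l σ nσ hnσ r μ t k a b hk0 hk1
  refine ⟨fun m => c m * (Complex.I * ((perp k i : ℝ) : ℂ)), fun x => ?_⟩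
  have hb : bflow k l x i = Complex.I * ((perp k i : ℝ) : ℂ) * eFreq (nl*a, nl*b) x := by
    rw [bflow, eFreq]
    congr 3
    rw [Complex.ofReal_inj]
    have hkx : k ⬝ᵥ x = (a:ℝ)/5 * x 0 + (b:ℝ)/5 * x 1 := by
      simp [dotProduct, Fin.sum_univ_two, hk0, hk1]
    rw [hkx, hnl]
    push_cast
    ring
  show ((ηfun k l σ r μ t x : ℝ) : ℂ) * bflow k l x i = _
  rw [hc x, hb, Finset.sum_mul]
  refine Finset.sum_congr rfl fun m _ => ?_
  rw [← eFreq_mul]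
  ring

lemma prod_expand {T T' : Finset (ℤ × ℤ)} {φ ψ : ℤ × ℤ → ℤ × ℤ} {c d : ℤ × ℤ → ℂ}
    {f g : Vec2 → ℂ}
    (hf : ∀ x, f x = ∑ m ∈ T, c m * eFreq (φ m) x)
    (hg : ∀ x, g x = ∑ m ∈ T', d m * eFreq (ψ m) x) (x : Vec2) :
    f x * g x = ∑ p ∈ T ×ˢ T', (c p.1 * d p.2) * eFreq (φ p.1 + ψ p.2) x := by
  rw [hf x, hg x, Finset.sum_mul_sum, Finset.sum_product]
  refine Finset.sum_congr rfl fun m _ => Finset.sum_congr rfl fun m' _ => ?_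
  rw [← eFreq_mul]
  ring

lemma otC_expand (l σ : ℝ) (nσ nl : ℤ) (hnσ : l * σ = 5 * nσ) (hnl : l = 5 * nl)
    (r : ℕ) (μ t : ℝ) (k k' : Vec2) (a b a' b' : ℤ)
    (hk0 : k 0 = (a:ℝ)/5) (hk1 : k 1 = (b:ℝ)/5)
    (hk0' : k' 0 = (a':ℝ)/5) (hk1' : k' 1 = (b':ℝ)/5) (i j : Fin 2) :
    ∃ C : (ℤ × ℤ) × (ℤ × ℤ) → ℂ, ∀ x,
      otC (wflow k l σ r μ t x) (wflow k' l σ r μ t x) i j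
        = ∑ p ∈ Ωr r ×ˢ Ωr r, C p *
            eFreq ((φf nσ a b p.1 + (nl*a, nl*b)) + (φf nσ a' b' p.2 + (nl*a', nl*b'))) x := by
  choose cw hcw using fun s : Fin 2 => w_expand l σ nσ nl hnσ hnl r μ t k a b hk0 hk1 s
  choose cw' hcw' using fun s : Fin 2 => w_expand l σ nσ nl hnσ hnl r μ t k' a' b' hk0' hk1' s
  refine ⟨fun p => cw i p.1 * cw' j p.2 -
    (if i = j then (cw 0 p.1 * cw' 0 p.2 + cw 1 p.1 * cw' 1 p.2) / 2 else 0), fun x => ?_⟩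
  have hP : ∀ s s' : Fin 2, wflow k l σ r μ t x s * wflow k' l σ r μ t x s'
      = ∑ p ∈ Ωr r ×ˢ Ωr r, (cw s p.1 * cw' s' p.2) *
          eFreq ((φf nσ a b p.1 + (nl*a, nl*b)) + (φf nσ a' b' p.2 + (nl*a', nl*b'))) x :=
    fun s s' => prod_expand (hcw s) (hcw' s') x
  show wflow k l σ r μ t x i * wflow k' l σ r μ t x j -
      (if i = j then ((wflow k l σ r μ t x) ⬝ᵥ (wflow k' l σ r μ t x)) / 2 else 0) = _
  rw [dotProduct, Fin.sum_univ_two, hP i j, hP 0 0, hP 1 1]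
  by_cases hij : i = j
  · simp only [if_pos hij]
    rw [← Finset.sum_add_distrib, Finset.sum_div, ← Finset.sum_sub_distrib]
    refine Finset.sum_congr rfl fun p _ => ?_
    ring
  · simp only [if_neg hij, sub_zero]

lemma lam_cases : ∀ k ∈ Λdir, ∃ a b : ℤ, a^2 + b^2 = 25 ∧ Odd (a + b) ∧
    k 0 = (a:ℝ)/5 ∧ k 1 = (b:ℝ)/5 := by
  intro k hk
  simp only [Λdir, Λm, Λp, Finset.mem_union, Finset.mem_insert, Finset.mem_singleton,
    Finset.mem_image] at hk
  rcases hk with (rfl | rfl | rfl | rfl) | ⟨p, (rfl | rfl | rfl | rfl), rfl⟩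
  · exact ⟨3, 4, by norm_num, by decide, by norm_num, by norm_num⟩
  · exact ⟨3, -4, by norm_num, by decide, by norm_num, by norm_num⟩
  · exact ⟨4, 3, by norm_num, by decide, by norm_num, by norm_num⟩
  · exact ⟨4, -3, by norm_num, by decide, by norm_num, by norm_num⟩
  · exact ⟨-3, -4, by norm_num, by decide, by norm_num, by norm_num⟩
  · exact ⟨-3, 4, by norm_num, by decide, by norm_num, by norm_num⟩
  · exact ⟨-4, -3, by norm_num, by decide, by norm_num, by norm_num⟩
  · exact ⟨-4, 3, by norm_num, by decide, by norm_num, by norm_num⟩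

end Aux

set_option maxHeartbeats 2000000 in
/-- Frequency localization of the intermittent flows:
`P_{[λ/2,2λ]} w_k = w_k`; `P_{[λ/5,4λ]}(w_k ⊘ w_{k'}) = w_k ⊘ w_{k'}` for `k+k' ≠ 0`;
`P_{≥λσ/2}(w_k ⊘ w_{k'}) = P_{≠0}(w_k ⊘ w_{k'})`; and `P_{≠0} η_k = P_{≥λσ/2} η_k`. -/
theorem statement16 (r μ : ℕ) (hr : 0 < r) (hμ : 0 < μ) (l σ : ℝ)
    (hσ : ∃ n : ℕ, 0 < n ∧ σ⁻¹ = (n : ℝ))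
    (hl : ∃ n : ℕ, 0 < n ∧ l = 5 * n)
    (hlσ : ∃ n : ℕ, 0 < n ∧ l * σ = 5 * n)
    (hσr : 40 * σ * r ≤ 1) :
    (∀ k ∈ Λdir, ∀ (t : ℝ) (i : Fin 2) (x : Vec2),
      Pband (l/2) (2*l) (fun y => wflow k l σ r (μ:ℝ) t y i) x
        = wflow k l σ r (μ:ℝ) t x i) ∧
    (∀ k ∈ Λdir, ∀ k' ∈ Λdir, k + k' ≠ 0 →
      ∀ (t : ℝ) (i j : Fin 2) (x : Vec2),
        Pband (l/5) (4*l)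
          (fun y => otC (wflow k l σ r (μ:ℝ) t y) (wflow k' l σ r (μ:ℝ) t y) i j) x
        = otC (wflow k l σ r (μ:ℝ) t x) (wflow k' l σ r (μ:ℝ) t x) i j) ∧
    (∀ k ∈ Λdir, ∀ k' ∈ Λdir, ∀ (t : ℝ) (i j : Fin 2) (x : Vec2),
      Pge (l*σ/2)
          (fun y => otC (wflow k l σ r (μ:ℝ) t y) (wflow k' l σ r (μ:ℝ) t y) i j) x
        = Pne0
          (fun y => otC (wflow k l σ r (μ:ℝ) t y) (wflow k' l σ r (μ:ℝ) t y) i j) x) ∧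
    (∀ k ∈ Λdir, ∀ (t : ℝ) (x : Vec2),
      Pne0 (fun y => ((ηfun k l σ r (μ:ℝ) t y : ℝ) : ℂ)) x
        = Pge (l*σ/2) (fun y => ((ηfun k l σ r (μ:ℝ) t y : ℝ) : ℂ)) x) := by
  obtain ⟨ninv, hninv, hσinv⟩ := hσ
  obtain ⟨nl0, hnl0, hl5⟩ := hl
  obtain ⟨ns0, hns0, hlσ5⟩ := hlσ
  set Nσ : ℤ := (ns0 : ℤ) with hNσdef
  set Nl : ℤ := (nl0 : ℤ) with hNldef
  have hnσ : l * σ = 5 * (Nσ:ℝ) := by rw [hlσ5, hNσdef]; push_cast; ring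
  have hnl : l = 5 * (Nl:ℝ) := by rw [hl5, hNldef]; push_cast; ring
  have hNσpos : 0 < Nσ := by rw [hNσdef]; exact_mod_cast hns0
  have hNlpos : 0 < Nl := by rw [hNldef]; exact_mod_cast hnl0
  have hσpos : 0 < σ := inv_pos.1 (by rw [hσinv]; exact_mod_cast hninv)
  have hlpos : 0 < l := by
    rw [hnl]
    have : (0:ℝ) < (Nl:ℝ) := by exact_mod_cast hNlpos
    linarith
  have hlσpos : 0 < l * σ := mul_pos hlpos hσpos
  have hr1 : (1:ℝ) ≤ (r:ℝ) := by exact_mod_cast hr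
  have hrσ : l * σ * r ≤ l / 40 := by nlinarith
  have hlσle : l * σ ≤ l / 40 := by nlinarith
  have hs2 : Real.sqrt 2 ^ 2 = 2 := Real.sq_sqrt (by norm_num)
  have hs2nn : 0 ≤ Real.sqrt 2 := Real.sqrt_nonneg 2
  have hs2le : Real.sqrt 2 ≤ 2 := by nlinarith
  have hs2ge : (4:ℝ)/3 ≤ Real.sqrt 2 := by nlinarith
  -- norm of the small frequencies
  have hφnorm : ∀ a b : ℤ, a^2+b^2 = 25 → ∀ m : ℤ × ℤ,
      freqNorm (φf Nσ a b m) = (l*σ) * freqNorm m := by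
    intro a b hab m
    rw [freqNorm_φf hNσpos.le m]
    have h25 : ((a:ℝ)^2 + (b:ℝ)^2) = 25 := by exact_mod_cast congrArg (Int.cast : ℤ → ℝ) hab
    rw [h25, show (25:ℝ) = 5^2 by norm_num, Real.sqrt_sq (by norm_num : (0:ℝ) ≤ 5), hnσ]
    ring
  have hφsmall : ∀ a b : ℤ, a^2+b^2 = 25 → ∀ m ∈ Ωr r,
      freqNorm (φf Nσ a b m) ≤ Real.sqrt 2 * (l/40) := by
    intro a b hab m hm
    rw [hφnorm a b hab m]
    obtain ⟨⟨h1, h2⟩, ⟨h3, h4⟩⟩ := mem_Ωr.1 hm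
    have hfm := freqNorm_le_sqrt2 (abs_le.2 ⟨h1, h2⟩) (abs_le.2 ⟨h3, h4⟩)
    calc (l*σ) * freqNorm m ≤ (l*σ) * (Real.sqrt 2 * r) :=
          mul_le_mul_of_nonneg_left hfm hlσpos.le
    _ = Real.sqrt 2 * (l*σ*r) := by ring
    _ ≤ Real.sqrt 2 * (l/40) := mul_le_mul_of_nonneg_left hrσ hs2nn
  have hφsmall2 : ∀ a b : ℤ, a^2+b^2 = 25 → ∀ m ∈ Ωr r,
      freqNorm (φf Nσ a b m) ≤ l/20 := by
    intro a b hab m hm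
    have h := hφsmall a b hab m hm
    have h2 : Real.sqrt 2 * (l/40) ≤ 2 * (l/40) :=
      mul_le_mul_of_nonneg_right hs2le (by positivity)
    linarith
  have hν : ∀ a b : ℤ, a^2+b^2 = 25 → freqNorm ((Nl*a, Nl*b) : ℤ × ℤ) = l := by
    intro a b hab
    rw [freqNorm_pair Nl a b hNlpos.le]
    have h25 : ((a:ℝ)^2 + (b:ℝ)^2) = 25 := by exact_mod_cast congrArg (Int.cast : ℤ → ℝ) hab
    rw [h25, show (25:ℝ) = 5^2 by norm_num, Real.sqrt_sq (by norm_num : (0:ℝ) ≤ 5), hnl]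
    ring
  -- the two-sided band estimate for the product frequencies, k + k' ≠ 0
  have hprodband : ∀ a b a' b' : ℤ, a^2+b^2 = 25 → a'^2+b'^2 = 25 →
      Odd (a+b) → Odd (a'+b') → ¬(a + a' = 0 ∧ b + b' = 0) →
      ∀ p ∈ Ωr r ×ˢ Ωr r,
        l/5 ≤ freqNorm ((φf Nσ a b p.1 + (Nl*a, Nl*b)) + (φf Nσ a' b' p.2 + (Nl*a', Nl*b')))
        ∧ freqNorm ((φf Nσ a b p.1 + (Nl*a, Nl*b)) + (φf Nσ a' b' p.2 + (Nl*a', Nl*b'))) ≤ 4*l := by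
    intro a b a' b' hab hab' hodd hodd' hne p hp
    obtain ⟨hp1, hp2⟩ := Finset.mem_product.1 hp
    have hS := S_ge_two hodd hodd' hne
    have hresplit : (φf Nσ a b p.1 + (Nl*a, Nl*b)) + (φf Nσ a' b' p.2 + (Nl*a', Nl*b'))
        = ((Nl*(a+a'), Nl*(b+b')) : ℤ × ℤ) + (φf Nσ a b p.1 + φf Nσ a' b' p.2) := by
      apply Prod.ext <;>
        simp only [φf, Prod.fst_add, Prod.snd_add, Prod.mk.injEq] <;> ring
    rw [hresplit]
    have hννeq : ((Nl*(a+a'), Nl*(b+b')) : ℤ × ℤ) = (Nl*a, Nl*b) + (Nl*a', Nl*b') := by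
      apply Prod.ext <;> simp only [Prod.fst_add, Prod.snd_add] <;> ring
    have hννup : freqNorm ((Nl*(a+a'), Nl*(b+b')) : ℤ × ℤ) ≤ 2*l := by
      rw [hννeq]
      have h := freqNorm_add_le (Nl*a, Nl*b) (Nl*a', Nl*b')
      rw [hν a b hab, hν a' b' hab'] at h
      linarith
    have hννlow : Real.sqrt 2 * (l/5) ≤ freqNorm ((Nl*(a+a'), Nl*(b+b')) : ℤ × ℤ) := by
      rw [freqNorm_pair _ _ _ hNlpos.le]
      have hS' : (2:ℝ) ≤ ((a+a':ℤ):ℝ)^2 + ((b+b':ℤ):ℝ)^2 := by exact_mod_cast hS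
      have hsq : Real.sqrt 2 ≤ Real.sqrt (((a+a':ℤ):ℝ)^2 + ((b+b':ℤ):ℝ)^2) :=
        Real.sqrt_le_sqrt hS'
      have hNl5 : (Nl:ℝ) = l/5 := by linarith
      rw [hNl5]
      calc Real.sqrt 2 * (l/5) ≤ Real.sqrt (((a+a':ℤ):ℝ)^2 + ((b+b':ℤ):ℝ)^2) * (l/5) :=
            mul_le_mul_of_nonneg_right hsq (by positivity)
      _ = l/5 * Real.sqrt (((a+a':ℤ):ℝ)^2 + ((b+b':ℤ):ℝ)^2) := by ring
    have hsmall : freqNorm (φf Nσ a b p.1 + φf Nσ a' b' p.2) ≤ 2 * (Real.sqrt 2 * (l/40)) := by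
      have h := freqNorm_add_le (φf Nσ a b p.1) (φf Nσ a' b' p.2)
      have h1 := hφsmall a b hab p.1 hp1
      have h2 := hφsmall a' b' hab' p.2 hp2
      linarith
    constructor
    · have hbig := freqNorm_add_ge ((Nl*(a+a'), Nl*(b+b')) : ℤ × ℤ)
        (φf Nσ a b p.1 + φf Nσ a' b' p.2)
      have hchain : Real.sqrt 2 * (l/5) - 2 * (Real.sqrt 2 * (l/40))
          ≤ freqNorm (((Nl*(a+a'), Nl*(b+b')) : ℤ × ℤ) + (φf Nσ a b p.1 + φf Nσ a' b' p.2)) := by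
        linarith
      have hval : Real.sqrt 2 * (l/5) - 2 * (Real.sqrt 2 * (l/40)) = Real.sqrt 2 * (3*l/20) := by
        ring
      have hge : (4:ℝ)/3 * (3*l/20) ≤ Real.sqrt 2 * (3*l/20) :=
        mul_le_mul_of_nonneg_right hs2ge (by positivity)
      have : (4:ℝ)/3 * (3*l/20) = l/5 := by ring
      linarith
    · have hup := freqNorm_add_le ((Nl*(a+a'), Nl*(b+b')) : ℤ × ℤ)
        (φf Nσ a b p.1 + φf Nσ a' b' p.2)
      have h2 : 2 * (Real.sqrt 2 * (l/40)) ≤ 2 * (2 * (l/40)) := by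
        have := mul_le_mul_of_nonneg_right hs2le (by positivity : (0:ℝ) ≤ l/40)
        linarith
      linarith
  have hne_of_sum : ∀ (k k' : Vec2) (a b a' b' : ℤ), k 0 = (a:ℝ)/5 → k 1 = (b:ℝ)/5 →
      k' 0 = (a':ℝ)/5 → k' 1 = (b':ℝ)/5 → k + k' ≠ 0 → ¬(a + a' = 0 ∧ b + b' = 0) := by
    intro k k' a b a' b' hk0 hk1 hk0' hk1' hkk
    rintro ⟨h1, h2⟩
    apply hkk
    funext s
    rw [Pi.add_apply, Pi.zero_apply]
    fin_cases s
    · show k 0 + k' 0 = 0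
      rw [hk0, hk0']
      have : (a:ℝ) + (a':ℝ) = 0 := by exact_mod_cast congrArg (Int.cast : ℤ → ℝ) h1
      linarith
    · show k 1 + k' 1 = 0
      rw [hk1, hk1']
      have : (b:ℝ) + (b':ℝ) = 0 := by exact_mod_cast congrArg (Int.cast : ℤ → ℝ) h2
      linarith
  refine ⟨?_, ?_, ?_, ?_⟩
  · -- statement (i)
    intro k hk t i x
    obtain ⟨a, b, hab, hodd, hk0, hk1⟩ := lam_cases k hk
    obtain ⟨c, hc⟩ := w_expand l σ Nσ Nl hnσ hnl r (μ:ℝ) t k a b hk0 hk1 i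
    refine Pband_of_rep hc ?_ x
    intro m hm
    have hφ := hφsmall2 a b hab m hm
    have hν' := hν a b hab
    have hge : l - l/20 ≤ freqNorm (φf Nσ a b m + (Nl*a, Nl*b)) := by
      have h := freqNorm_add_ge ((Nl*a, Nl*b) : ℤ × ℤ) (φf Nσ a b m)
      rw [hν'] at h
      rw [add_comm ((Nl*a, Nl*b) : ℤ × ℤ) (φf Nσ a b m)] at h
      linarith
    have hle := freqNorm_add_le (φf Nσ a b m) ((Nl*a, Nl*b) : ℤ × ℤ)
    rw [hν'] at hle
    exact ⟨by linarith, by linarith⟩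
  · -- statement (ii)
    intro k hk k' hk' hkk t i j x
    obtain ⟨a, b, hab, hodd, hk0, hk1⟩ := lam_cases k hk
    obtain ⟨a', b', hab', hodd', hk0', hk1'⟩ := lam_cases k' hk'
    obtain ⟨C, hC⟩ := otC_expand l σ Nσ Nl hnσ hnl r (μ:ℝ) t k k' a b a' b'
      hk0 hk1 hk0' hk1' i j
    refine Pband_of_rep hC ?_ x
    intro p hp
    exact hprodband a b a' b' hab hab' hodd hodd'
      (hne_of_sum k k' a b a' b' hk0 hk1 hk0' hk1' hkk) p hp
  · -- statement (iii)
    intro k hk k' hk' t i j x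
    obtain ⟨a, b, hab, hodd, hk0, hk1⟩ := lam_cases k hk
    obtain ⟨a', b', hab', hodd', hk0', hk1'⟩ := lam_cases k' hk'
    obtain ⟨C, hC⟩ := otC_expand l σ Nσ Nl hnσ hnl r (μ:ℝ) t k k' a b a' b'
      hk0 hk1 hk0' hk1' i j
    refine Pge_eq_Pne0_of_rep hC (by linarith : (0:ℝ) < l*σ/2) ?_ x
    intro p hp hΦne
    by_cases hkk : k + k' = 0
    · have ha' : a' = -a := by
        have h0 := congrFun hkk 0
        rw [Pi.add_apply, Pi.zero_apply, hk0, hk0'] at h0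
        have : (a':ℝ) = ((-a : ℤ) : ℝ) := by push_cast; linarith
        exact_mod_cast this
      have hb' : b' = -b := by
        have h0 := congrFun hkk 1
        rw [Pi.add_apply, Pi.zero_apply, hk1, hk1'] at h0
        have : (b':ℝ) = ((-b : ℤ) : ℝ) := by push_cast; linarith
        exact_mod_cast this
      subst ha' hb'
      have hΦ : (φf Nσ a b p.1 + (Nl*a, Nl*b)) + (φf Nσ (-a) (-b) p.2 + (Nl*(-a), Nl*(-b)))
          = φf Nσ a b (p.1 - p.2) := by
        apply Prod.ext <;>
          simp only [φf, Prod.fst_add, Prod.snd_add, Prod.fst_sub, Prod.snd_sub,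
            Prod.mk.injEq] <;> ring
      rw [hΦ] at hΦne ⊢
      have hne0 : p.1 - p.2 ≠ 0 := by
        intro h
        apply hΦne
        rw [h]
        show ((Nσ*((0:ℤ×ℤ).1*a - (0:ℤ×ℤ).2*b), Nσ*((0:ℤ×ℤ).1*b + (0:ℤ×ℤ).2*a)) : ℤ × ℤ) = 0
        simp
      rw [hφnorm a b hab]
      have h1 := freqNorm_ge_one hne0
      nlinarith
    · have hlow := (hprodband a b a' b' hab hab' hodd hodd'
        (hne_of_sum k k' a b a' b' hk0 hk1 hk0' hk1' hkk) p hp).1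
      linarith
  · -- statement (iv)
    intro k hk t x
    obtain ⟨a, b, hab, hodd, hk0, hk1⟩ := lam_cases k hk
    obtain ⟨c, hc⟩ := eta_expand l σ Nσ hnσ r (μ:ℝ) t k a b hk0 hk1
    refine (Pge_eq_Pne0_of_rep hc (by linarith : (0:ℝ) < l*σ/2) ?_ x).symm
    intro m hm hmne
    have hm0 : m ≠ 0 := by
      intro h
      apply hmne
      rw [h]
      show ((Nσ*((0:ℤ×ℤ).1*a - (0:ℤ×ℤ).2*b), Nσ*((0:ℤ×ℤ).1*b + (0:ℤ×ℤ).2*a)) : ℤ × ℤ) = 0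
      simp
    rw [hφnorm a b hab]
    have h1 := freqNorm_ge_one hm0
    nlinarith
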